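/- Let μ be the signed measure on [0,∞) with density f(x) = x(1/2 + cos x). Then liminf_{τ↓0} |Ψ_μ(τ)| / Ψ_{|μ|}(τ) ≥ 1/3 > 0, where |μ| has density x|1/2 + cos x|; in particular |μ|'s density is bounded by (3/2)x so Ψ_{|μ|}(τ) ≤ 3/(2τ²). -/

import Mathlib

open MeasureTheory Filter Topology Set
open scoped NNReal ENNReal

lemma int_x_exp {τ : ℝ} (hτ : 0 < τ) :
    IntegrableOn (fun x : ℝ => x * Real.exp (-(τ * x))) (Ioi 0) := by
  apply integrable_of_isBigO_exp_neg (b := τ / 2) (half_pos hτ)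
  · exact (continuous_id.mul (Real.continuous_exp.comp (by continuity))).continuousOn
  · apply Asymptotics.IsBigO.of_bound 1
    have h := tendsto_rpow_mul_exp_neg_mul_atTop_nhds_zero 1 (τ/2) (half_pos hτ)
    filter_upwards [(h.eventually (eventually_le_nhds one_pos)).and (eventually_ge_atTop (0:ℝ))]
      with x hx
    obtain ⟨h1, h0⟩ := hx
    rw [Real.rpow_one] at h1
    have : |x * Real.exp (-(τ * x))| = (x * Real.exp (-(τ/2) * x)) * Real.exp (-(τ/2) * x) := by
      rw [_root_.abs_of_nonneg (by positivity)]
      rw [mul_assoc, ← Real.exp_add]; ring_nf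
    rw [Real.norm_eq_abs, Real.norm_eq_abs, this, _root_.abs_of_nonneg (Real.exp_pos _).le, one_mul]
    exact mul_le_of_le_one_left (Real.exp_pos _).le h1 |>.trans le_rfl

lemma val_x_exp {τ : ℝ} (hτ : 0 < τ) :
    ∫ x in Ioi (0:ℝ), x * Real.exp (-(τ * x)) = 1 / τ ^ 2 := by
  have h := Real.integral_rpow_mul_exp_neg_mul_Ioi (a := 2) (r := τ) two_pos hτ
  simp only [show (2:ℝ) - 1 = 1 by norm_num, Real.rpow_one, Real.Gamma_two, mul_one] at h
  rw [h, show ((1:ℝ)/τ) ^ (2:ℝ) = 1 / τ ^ 2 by rw [Real.rpow_two, div_pow, one_pow]]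

lemma exp_tend {r : ℝ} (hr : 0 < r) :
    Tendsto (fun x : ℝ => Real.exp (-(r * x))) atTop (𝓝 0) := by
  apply Real.tendsto_exp_atBot.comp
  exact tendsto_neg_atBot_iff.mpr (Tendsto.const_mul_atTop hr tendsto_id)

lemma x_exp_tend {r : ℝ} (hr : 0 < r) :
    Tendsto (fun x : ℝ => x * Real.exp (-(r * x))) atTop (𝓝 0) := by
  have h := tendsto_rpow_mul_exp_neg_mul_atTop_nhds_zero 1 r hr
  refine h.congr' ?_
  filter_upwards [eventually_gt_atTop (0:ℝ)] with x hx
  rw [Real.rpow_one, neg_mul]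

lemma cexp_deriv (c : ℂ) (x : ℝ) :
    HasDerivAt (fun x : ℝ => Complex.exp (-(c * x))) (-c * Complex.exp (-(c * x))) x := by
  have h1 : HasDerivAt (fun x : ℝ => -(c * (x:ℂ))) (-c) x := by
    simpa using ((Complex.ofRealCLM.hasDerivAt (x := x)).const_mul c).fun_neg
  simpa [mul_comm] using h1.cexp

lemma cint_integrable {c : ℂ} (hc : 0 < c.re) :
    IntegrableOn (fun x : ℝ => (x:ℂ) * Complex.exp (-(c * x))) (Ioi 0) := by
  refine (int_x_exp hc).integrable.mono' ?_ ?_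
  · exact (Complex.continuous_ofReal.mul
      (Complex.continuous_exp.comp (by continuity))).aestronglyMeasurable
  · filter_upwards [ae_restrict_mem measurableSet_Ioi] with x hx
    rw [norm_mul, Complex.norm_exp]
    have : (-(c * (x:ℝ))).re = -(c.re * x) := by simp
    rw [this]
    gcongr
    simp [Complex.norm_real, Real.norm_eq_abs, _root_.abs_of_nonneg (le_of_lt (mem_Ioi.mp hx))]

lemma cint_val {c : ℂ} (hc : 0 < c.re) :
    ∫ x in Ioi (0:ℝ), (x:ℂ) * Complex.exp (-(c * x)) = 1 / c ^ 2 := by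
  have hc0 : c ≠ 0 := fun h => by simp [h] at hc
  set F : ℝ → ℂ := fun x => -((x:ℂ) / c + 1 / c ^ 2) * Complex.exp (-(c * x)) with hF
  have hderiv : ∀ x ∈ Ici (0:ℝ), HasDerivAt F ((x:ℂ) * Complex.exp (-(c * x))) x := by
    intro x _
    have h1 : HasDerivAt (fun x : ℝ => -((x:ℂ) / c + 1 / c ^ 2)) (-(1 / c)) x := by
      have h1' := (((Complex.ofRealCLM.hasDerivAt (x := x)).div_const c).add_const
        ((1:ℂ)/c^2)).fun_neg
      convert h1' using 1
      · rfl
      · rfl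
      · simp
    have := h1.fun_mul (cexp_deriv c x)
    convert this using 1
    · rfl
    field_simp
    ring
  have htend : Tendsto F atTop (𝓝 0) := by
    apply squeeze_zero_norm' (a := fun x : ℝ =>
      ‖(1:ℂ)/c‖ * (x * Real.exp (-(c.re * x))) + ‖(1:ℂ)/c^2‖ * Real.exp (-(c.re * x)))
    · filter_upwards [eventually_ge_atTop (0:ℝ)] with x hx
      rw [hF]
      simp only
      rw [norm_mul, Complex.norm_exp]
      have hre : (-(c * (x:ℝ))).re = -(c.re * x) := by simp
      rw [hre, norm_neg]
      calc ‖(x:ℂ)/c + 1/c^2‖ * Real.exp (-(c.re*x))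
          ≤ (‖(x:ℂ)/c‖ + ‖(1:ℂ)/c^2‖) * Real.exp (-(c.re*x)) := by
            gcongr; exact norm_add_le _ _
        _ = ‖(1:ℂ)/c‖ * (x * Real.exp (-(c.re*x))) + ‖(1:ℂ)/c^2‖ * Real.exp (-(c.re*x)) := by
            rw [add_mul]
            congr 1
            rw [norm_div, Complex.norm_real, Real.norm_eq_abs, _root_.abs_of_nonneg hx,
              norm_div, norm_one]
            ring
    · have := ((x_exp_tend hc).const_mul (‖(1:ℂ)/c‖)).add ((exp_tend hc).const_mul (‖(1:ℂ)/c^2‖))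
      simpa using this
  have key := MeasureTheory.integral_Ioi_of_hasDerivAt_of_tendsto'
    hderiv (cint_integrable hc) htend
  rw [key, hF]
  simp

lemma cos_int_bound {τ : ℝ} (hτ : 0 < τ) :
    |∫ x in Ioi (0:ℝ), x * Real.exp (-(τ * x)) * Real.cos x| ≤ 1 := by
  set c : ℂ := (τ : ℂ) - Complex.I with hcdef
  have hc : 0 < c.re := by simp [hcdef, hτ]
  have h1 : ∫ x in Ioi (0:ℝ), x * Real.exp (-(τ * x)) * Real.cos x
      = (∫ x in Ioi (0:ℝ), (x:ℂ) * Complex.exp (-(c * x))).re := by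
    rw [show (∫ x in Ioi (0:ℝ), (x:ℂ) * Complex.exp (-(c * x))).re
        = RCLike.re (∫ x in Ioi (0:ℝ), (x:ℂ) * Complex.exp (-(c * x))) from rfl,
      ← integral_re (cint_integrable hc)]
    refine setIntegral_congr_fun measurableSet_Ioi (fun x _ => ?_)
    rw [show RCLike.re ((x:ℂ) * Complex.exp (-(c * x)))
        = ((x:ℂ) * Complex.exp (-(c * x))).re from rfl]
    have : ((x:ℂ) * Complex.exp (-(c * x))).re
        = x * (Real.exp ((-(c * x)).re) * Real.cos ((-(c * x)).im)) := by
      rw [Complex.mul_re, Complex.exp_re]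
      simp
    rw [this]
    have hre : (-(c * (x:ℝ))).re = -(τ * x) := by simp [hcdef]
    have him : (-(c * (x:ℝ))).im = x := by simp [hcdef]
    rw [hre, him]; ring
  rw [h1]
  refine (Complex.abs_re_le_norm _).trans ?_
  rw [cint_val hc, norm_div, norm_one, norm_pow]
  have habs : ‖c‖ ^ 2 = τ ^ 2 + 1 := by
    rw [Complex.sq_norm, Complex.normSq_apply]
    simp [hcdef]
    ring
  rw [habs]
  rw [div_le_one (by positivity)]
  nlinarith

lemma int_cos_piece {τ : ℝ} (hτ : 0 < τ) :
    IntegrableOn (fun x : ℝ => x * Real.exp (-(τ * x)) * Real.cos x) (Ioi 0) := by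
  refine (int_x_exp hτ).integrable.mono' ?_ ?_
  · exact ((continuous_id.mul (Real.continuous_exp.comp (by continuity))).mul
      Real.continuous_cos).aestronglyMeasurable
  · filter_upwards [ae_restrict_mem measurableSet_Ioi] with x hx
    rw [Real.norm_eq_abs, abs_mul, abs_mul, abs_of_nonneg (le_of_lt hx),
      abs_of_nonneg (Real.exp_pos _).le]
    have h1 := Real.abs_cos_le_one x
    have hxe : 0 ≤ x * Real.exp (-(τ * x)) := by
      have hx' := le_of_lt (show (0:ℝ) < x from hx); positivity
    exact mul_le_of_le_one_right hxe h1

/-- for the signed measure with density `f(x) = x (1/2 + cos x)` and its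
variation with density `x |1/2 + cos x|`, one has
`liminf_{τ↓0} |Ψ_μ(τ)|/Ψ_{|μ|}(τ) ≥ 1/3 > 0`; the variation's density is bounded by
`(3/2) x`, so `Ψ_{|μ|}(τ) ≤ 3/(2τ²)` for `τ > 0`. -/
theorem liminf_ratio_cosine_density (Ψ Ψabs : ℝ → ℝ)
    (hΨ : ∀ τ : ℝ, Ψ τ =
      ∫ x in Set.Ioi (0 : ℝ), Real.exp (-(τ * x)) * (x * (1 / 2 + Real.cos x)))
    (hΨabs : ∀ τ : ℝ, Ψabs τ =
      ∫ x in Set.Ioi (0 : ℝ), Real.exp (-(τ * x)) * (x * |1 / 2 + Real.cos x|)) :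
    (∀ x : ℝ, 0 ≤ x → x * |1 / 2 + Real.cos x| ≤ (3 / 2) * x) ∧
    (∀ τ : ℝ, 0 < τ → Ψabs τ ≤ 3 / (2 * τ ^ 2)) ∧
    ((1 / 3 : ℝ) ≤ Filter.liminf (fun τ : ℝ => |Ψ τ| / Ψabs τ) (𝓝[>] 0) ∧
      (0 : ℝ) < Filter.liminf (fun τ : ℝ => |Ψ τ| / Ψabs τ) (𝓝[>] 0)) := by
  have hdens : ∀ x : ℝ, 0 ≤ x → x * |1 / 2 + Real.cos x| ≤ (3 / 2) * x := by
    intro x hx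
    have h1 : |1 / 2 + Real.cos x| ≤ 3 / 2 := by
      rw [abs_le]
      constructor <;> nlinarith [Real.neg_one_le_cos x, Real.cos_le_one x]
    calc x * |1 / 2 + Real.cos x| ≤ x * (3 / 2) := by
          exact mul_le_mul_of_nonneg_left h1 hx
      _ = (3 / 2) * x := by ring
  -- integrability of the |μ| integrand
  have habs_int : ∀ τ : ℝ, 0 < τ →
      IntegrableOn (fun x : ℝ => Real.exp (-(τ * x)) * (x * |1 / 2 + Real.cos x|)) (Ioi 0) := by
    intro τ hτ
    refine ((int_x_exp hτ).integrable.const_mul (3/2)).mono' ?_ ?_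
    · exact ((Real.continuous_exp.comp (by continuity)).mul
        (continuous_id.mul (continuous_abs.comp (by continuity)))).aestronglyMeasurable
    · filter_upwards [ae_restrict_mem measurableSet_Ioi] with x hx
      have hx' := le_of_lt (show (0:ℝ) < x from hx)
      rw [Real.norm_eq_abs, abs_of_nonneg (by positivity)]
      have := hdens x hx'
      have he := Real.exp_pos (-(τ * x))
      calc Real.exp (-(τ * x)) * (x * |1 / 2 + Real.cos x|)
          ≤ Real.exp (-(τ * x)) * ((3/2) * x) := by
            exact mul_le_mul_of_nonneg_left this he.le
        _ = 3 / 2 * (x * Real.exp (-(τ * x))) := by ring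
  -- part 2
  have hpart2 : ∀ τ : ℝ, 0 < τ → Ψabs τ ≤ 3 / (2 * τ ^ 2) := by
    intro τ hτ
    rw [hΨabs τ]
    have hle := setIntegral_mono_on (habs_int τ hτ)
      ((int_x_exp hτ).integrable.const_mul (3/2)) measurableSet_Ioi
      (fun x hx => by
        have := hdens x (le_of_lt hx)
        have he := Real.exp_pos (-(τ * x))
        calc Real.exp (-(τ * x)) * (x * |1 / 2 + Real.cos x|)
            ≤ Real.exp (-(τ * x)) * ((3/2) * x) := mul_le_mul_of_nonneg_left this he.le
          _ = 3 / 2 * (x * Real.exp (-(τ * x))) := by ring)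
    refine hle.trans ?_
    rw [integral_const_mul, val_x_exp hτ,
      show (3:ℝ)/2 * (1/τ^2) = 3/(2*τ^2) by field_simp]
  -- Ψ lower bound
  have hΨlow : ∀ τ : ℝ, 0 < τ → 1 / (2 * τ ^ 2) - 1 ≤ Ψ τ := by
    intro τ hτ
    have hsplit : Ψ τ = 1/2 * (1 / τ ^ 2)
        + ∫ x in Ioi (0:ℝ), x * Real.exp (-(τ * x)) * Real.cos x := by
      rw [hΨ τ]
      have : ∀ x ∈ Ioi (0:ℝ), Real.exp (-(τ * x)) * (x * (1 / 2 + Real.cos x))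
          = 1/2 * (x * Real.exp (-(τ * x))) + x * Real.exp (-(τ * x)) * Real.cos x := by
        intro x _; ring
      rw [setIntegral_congr_fun measurableSet_Ioi this,
        integral_add ((int_x_exp hτ).integrable.const_mul (1/2)) (int_cos_piece hτ).integrable,
        integral_const_mul, val_x_exp hτ]
    have hb := cos_int_bound hτ
    rw [abs_le] at hb
    rw [hsplit]
    have : 1 / (2 * τ ^ 2) = 1/2 * (1 / τ ^ 2) := by ring
    linarith [hb.1]
  -- |Ψ| ≤ Ψabs
  have hΨle : ∀ τ : ℝ, |Ψ τ| ≤ Ψabs τ := by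
    intro τ
    rw [hΨ τ, hΨabs τ]
    refine (le_trans (le_of_eq (Real.norm_eq_abs _).symm)
      (norm_integral_le_integral_norm _)).trans (le_of_eq ?_)
    refine setIntegral_congr_fun measurableSet_Ioi (fun x hx => ?_)
    rw [Real.norm_eq_abs, abs_mul, abs_mul, abs_of_nonneg (Real.exp_pos _).le,
      abs_of_nonneg (le_of_lt hx)]
  -- eventual lower bound on the ratio
  have hev : ∀ᶠ τ in 𝓝[>] (0:ℝ), 1/3 - 2 * τ ^ 2 / 3 ≤ |Ψ τ| / Ψabs τ := by
    filter_upwards [Ioo_mem_nhdsGT_of_mem (by constructor <;> norm_num :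
      (0:ℝ) ∈ Ico (0:ℝ) (1/2))] with τ hτ
    obtain ⟨hτ0, hτh⟩ := hτ
    have hτ2 : 0 < τ ^ 2 := by positivity
    have hlow := hΨlow τ hτ0
    have hNpos : 0 < 1 / (2 * τ ^ 2) - 1 := by
      rw [sub_pos, lt_div_iff₀ (by positivity)]
      nlinarith
    have hN : 1 / (2 * τ ^ 2) - 1 ≤ |Ψ τ| := hlow.trans (le_abs_self _)
    have hD : 0 < Ψabs τ := lt_of_lt_of_le (lt_of_lt_of_le hNpos hN) (hΨle τ)
    have hDle : Ψabs τ ≤ 3 / (2 * τ ^ 2) := hpart2 τ hτ0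
    rw [le_div_iff₀ hD]
    have hcoef : (0:ℝ) ≤ 1/3 - 2 * τ ^ 2 / 3 := by nlinarith
    calc (1/3 - 2 * τ ^ 2 / 3) * Ψabs τ ≤ (1/3 - 2 * τ ^ 2 / 3) * (3 / (2 * τ ^ 2)) :=
          mul_le_mul_of_nonneg_left hDle hcoef
      _ = 1 / (2 * τ ^ 2) - 1 := by field_simp
      _ ≤ |Ψ τ| := hN
  have htendg : Tendsto (fun τ : ℝ => 1/3 - 2 * τ ^ 2 / 3) (𝓝[>] (0:ℝ)) (𝓝 (1/3)) := by
    have hc : Continuous (fun τ : ℝ => 1/3 - 2 * τ ^ 2 / 3) := by continuity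
    have := (hc.tendsto 0).mono_left (nhdsWithin_le_nhds (s := Ioi (0:ℝ)))
    simpa using this
  have h13 : (1/3 : ℝ) ≤ liminf (fun τ : ℝ => |Ψ τ| / Ψabs τ) (𝓝[>] 0) := by
    have hgeq : liminf (fun τ : ℝ => 1/3 - 2 * τ ^ 2 / 3) (𝓝[>] (0:ℝ)) = 1/3 :=
      htendg.liminf_eq
    rw [← hgeq]
    refine liminf_le_liminf hev ?_ ?_
    · exact htendg.isBoundedUnder_ge
    · refine isCoboundedUnder_ge_of_eventually_le (𝓝[>] (0:ℝ)) (x := (1:ℝ)) ?_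
      filter_upwards [Ioo_mem_nhdsGT_of_mem (by constructor <;> norm_num :
        (0:ℝ) ∈ Ico (0:ℝ) (1/2))] with τ h2
      obtain ⟨hτ0, hτh⟩ := h2
      have hτ2 : 0 < τ ^ 2 := by positivity
      have hNpos : 0 < 1 / (2 * τ ^ 2) - 1 := by
        rw [sub_pos, lt_div_iff₀ (by positivity)]
        nlinarith
      have hN : 1 / (2 * τ ^ 2) - 1 ≤ |Ψ τ| := (hΨlow τ hτ0).trans (le_abs_self _)
      have hD : 0 < Ψabs τ := lt_of_lt_of_le (lt_of_lt_of_le hNpos hN) (hΨle τ)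
      rw [div_le_one hD]
      exact hΨle τ
  exact ⟨hdens, hpart2, h13, lt_of_lt_of_le (by norm_num) h13⟩
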